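/- If b(x) is a constant vector field and H_δ(x) = {y ∈ B_δ(x) : −b·(y−x) > 0} is the upwind hemisphere, then for all x, y with |y−x| < δ and −b·(y−x) ≠ 0, the indicators satisfy 1_{H_δ(y)}(x) = 1 − 1_{H_δ(x)}(y), and consequently the nonlocal divergence of b vanishes: D_δ(b)(x) = ∫ (b 1_{H_δ(x)}(y) + b 1_{H_δ(y)}(x)) · [(y−x)/|y−x|] γ^conv_δ(|y−x|) dy = 0 for all x (in the principal-value sense). -/
import Mathlib


open MeasureTheory
open scoped RealInnerProductSpace

/-- for a constant velocity `b` and the upwind hemisphere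
`H_δ(x) = {y ∈ B_δ(x) : -b·(y-x) > 0}`, the indicators satisfy
`1_{H_δ(y)}(x) = 1 - 1_{H_δ(x)}(y)` whenever `|y-x| < δ` and `b·(y-x) ≠ 0`, and the
nonlocal divergence of `b` vanishes. -/
theorem stmt8 {d : ℕ} {δ : ℝ} (hδ : 0 < δ)
    (bconst : EuclideanSpace ℝ (Fin d)) (hb : bconst ≠ 0)
    (γ : ℝ → ℝ) (hγ0 : ∀ r, 0 ≤ γ r) (hγsupp : ∀ r, δ < r → γ r = 0)
    (hmom : Integrable (fun s : EuclideanSpace ℝ (Fin d) => γ ‖s‖ * ‖s‖))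
    (H : EuclideanSpace ℝ (Fin d) → Set (EuclideanSpace ℝ (Fin d)))
    (hHdef : ∀ x, H x = {y ∈ Metric.ball x δ | ⟪bconst, y - x⟫ < 0}) :
    (∀ x y : EuclideanSpace ℝ (Fin d), dist x y < δ → ⟪bconst, y - x⟫ ≠ 0 →
      ((H y).indicator (fun _ => (1 : ℝ)) x = 1 - (H x).indicator (fun _ => (1 : ℝ)) y)) ∧
    (∀ x : EuclideanSpace ℝ (Fin d),
      (∫ y, ((H x).indicator (fun _ => (1 : ℝ)) y + (H y).indicator (fun _ => (1 : ℝ)) x) *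
        (⟪bconst, y - x⟫ / ‖y - x‖) * γ (dist y x)) = 0) := by
  have hind : ∀ x y : EuclideanSpace ℝ (Fin d),
      (H x).indicator (fun _ => (1 : ℝ)) y
        = if dist y x < δ ∧ ⟪bconst, y - x⟫ < 0 then 1 else 0 := by
    intro x y
    rw [hHdef]
    simp [Set.indicator_apply, Metric.mem_ball, Set.mem_setOf_eq]
  constructor
  · intro x y hdist hne
    rw [hind, hind]
    have hsym : ⟪bconst, x - y⟫ = -⟪bconst, y - x⟫ := by
      rw [← inner_neg_right, neg_sub]
    rcases lt_or_gt_of_ne hne with h | h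
    · rw [if_neg, if_pos ⟨by rwa [dist_comm], h⟩]
      · ring
      · rintro ⟨-, h2⟩
        rw [hsym] at h2
        linarith
    · rw [if_pos ⟨hdist, by rw [hsym]; linarith⟩, if_neg]
      · ring
      · rintro ⟨-, h2⟩
        linarith
  · intro x
    set f : EuclideanSpace ℝ (Fin d) → ℝ := fun y =>
      ((H x).indicator (fun _ => (1 : ℝ)) y + (H y).indicator (fun _ => (1 : ℝ)) x) *
        (⟪bconst, y - x⟫ / ‖y - x‖) * γ (dist y x) with hf
    have hodd : ∀ s : EuclideanSpace ℝ (Fin d), f (x + -s) = - f (x + s) := by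
      intro s
      have e1 : ∀ t : EuclideanSpace ℝ (Fin d), x + t - x = t := fun t => add_sub_cancel_left x t
      have e2 : ∀ t : EuclideanSpace ℝ (Fin d), x - (x + t) = -t := by
        intro t; abel
      have e3 : ∀ t : EuclideanSpace ℝ (Fin d), dist (x + t) x = ‖t‖ := by
        intro t; rw [dist_eq_norm, e1]
      have e4 : ∀ t : EuclideanSpace ℝ (Fin d), dist x (x + t) = ‖t‖ := by
        intro t; rw [dist_comm]; exact e3 t
      simp only [hf, hind, e1, e2, e3, e4, norm_neg, inner_neg_right, neg_neg]
      ring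
    have h1 : (∫ y, f y) = ∫ s, f (x + s) :=
      (MeasureTheory.integral_add_left_eq_self f x).symm
    have h2 : (∫ s, f (x + s)) = ∫ s, f (x + -s) :=
      (MeasureTheory.integral_neg_eq_self (fun s => f (x + s)) volume).symm
    have h3 : (∫ s, f (x + -s)) = - ∫ s, f (x + s) := by
      simp only [hodd]
      exact integral_neg _
    show (∫ y, f y) = 0
    rw [h1] at *
    linarith [h2, h3]
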